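/- Convolution with a modular function: let F be submodular with F(∅)=0 and z ∈ ℝ^p. Then G(A) = min over B ⊆ A of [F(B) + z(A∖B)] is submodular, G ≤ F, G ≤ z (as set-functions), and P(G) = P(F) ∩ {s ∈ ℝ^p : s ≤ z}. -/

import Mathlib

def Submodular {p : ℕ} (F : Finset (Fin p) → ℝ) : Prop :=
  ∀ A B : Finset (Fin p), F (A ∪ B) + F (A ∩ B) ≤ F A + F B

def MemP {p : ℕ} (F : Finset (Fin p) → ℝ) (s : Fin p → ℝ) : Prop :=
  ∀ A : Finset (Fin p), ∑ k ∈ A, s k ≤ F A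

/-- Convolution of a submodular function and a modular function:
`G(A) = min_{B ⊆ A} F(B) + z(A ∖ B)` is submodular, `G ≤ F`, `G ≤ z`, and
`P(G) = P(F) ∩ {s ≤ z}`. -/
theorem convolution_submodular_modular {p : ℕ} (F : Finset (Fin p) → ℝ)
    (hF : Submodular F) (h0 : F ∅ = 0) (z : Fin p → ℝ)
    (G : Finset (Fin p) → ℝ)
    (hGdef : ∀ A : Finset (Fin p),
      G A = ((A.powerset.image fun B => F B + ∑ k ∈ A \ B, z k).min'
        ((A.powerset_nonempty).image _))) :
    Submodular G ∧
      (∀ A : Finset (Fin p), G A ≤ F A ∧ G A ≤ ∑ k ∈ A, z k) ∧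
      ∀ s : Fin p → ℝ, (MemP G s ↔ MemP F s ∧ ∀ k, s k ≤ z k) := by
  have hub : ∀ A B : Finset (Fin p), B ⊆ A → G A ≤ F B + ∑ k ∈ A \ B, z k := by
    intro A B hBA
    rw [hGdef A]
    exact Finset.min'_le _ _ (Finset.mem_image.2 ⟨B, Finset.mem_powerset.2 hBA, rfl⟩)
  have hex : ∀ A : Finset (Fin p), ∃ B, B ⊆ A ∧ G A = F B + ∑ k ∈ A \ B, z k := by
    intro A
    have h := Finset.min'_mem (A.powerset.image fun B => F B + ∑ k ∈ A \ B, z k)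
      ((A.powerset_nonempty).image _)
    rw [Finset.mem_image] at h
    obtain ⟨B, hB, hEq⟩ := h
    exact ⟨B, Finset.mem_powerset.1 hB, (hGdef A).trans hEq.symm⟩
  have hlb : ∀ (A : Finset (Fin p)) (c : ℝ),
      (∀ B ⊆ A, c ≤ F B + ∑ k ∈ A \ B, z k) → c ≤ G A := by
    intro A c h
    rw [hGdef A]
    apply Finset.le_min'
    intro y hy
    rw [Finset.mem_image] at hy
    obtain ⟨B, hB, rfl⟩ := hy
    exact h B (Finset.mem_powerset.1 hB)
  have hGF : ∀ A : Finset (Fin p), G A ≤ F A := by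
    intro A
    have := hub A A (subset_refl A)
    simpa using this
  have hGz : ∀ A : Finset (Fin p), G A ≤ ∑ k ∈ A, z k := by
    intro A
    have := hub A ∅ (Finset.empty_subset A)
    simpa [h0] using this
  refine ⟨?_, fun A => ⟨hGF A, hGz A⟩, ?_⟩
  · intro A B
    obtain ⟨C, hCA, hC⟩ := hex A
    obtain ⟨D, hDB, hD⟩ := hex B
    have h1 : G (A ∪ B) ≤ F (C ∪ D) + ∑ k ∈ (A ∪ B) \ (C ∪ D), z k :=
      hub _ _ (Finset.union_subset_union hCA hDB)
    have h2 : G (A ∩ B) ≤ F (C ∩ D) + ∑ k ∈ (A ∩ B) \ (C ∩ D), z k :=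
      hub _ _ (Finset.inter_subset_inter hCA hDB)
    have hz : ∑ k ∈ (A ∪ B) \ (C ∪ D), z k + ∑ k ∈ (A ∩ B) \ (C ∩ D), z k
        = ∑ k ∈ A \ C, z k + ∑ k ∈ B \ D, z k := by
      rw [Finset.sum_sdiff_eq_sub (Finset.union_subset_union hCA hDB),
          Finset.sum_sdiff_eq_sub (Finset.inter_subset_inter hCA hDB),
          Finset.sum_sdiff_eq_sub hCA, Finset.sum_sdiff_eq_sub hDB]
      have e1 : ∑ k ∈ A ∪ B, z k + ∑ k ∈ A ∩ B, z k
          = ∑ k ∈ A, z k + ∑ k ∈ B, z k := Finset.sum_union_inter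
      have e2 : ∑ k ∈ C ∪ D, z k + ∑ k ∈ C ∩ D, z k
          = ∑ k ∈ C, z k + ∑ k ∈ D, z k := Finset.sum_union_inter
      linarith
    have hFsub := hF C D
    rw [hC, hD]
    linarith
  · intro s
    constructor
    · intro hs
      refine ⟨fun A => (hs A).trans (hGF A), fun k => ?_⟩
      have h1 := hs {k}
      have h2 := hub {k} ∅ (Finset.empty_subset _)
      simp [h0] at h1 h2
      linarith
    · rintro ⟨hsF, hsz⟩ A
      apply hlb
      intro B hB
      have hsplit : ∑ k ∈ A, s k = ∑ k ∈ B, s k + ∑ k ∈ A \ B, s k := by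
        rw [add_comm, Finset.sum_sdiff hB]
      rw [hsplit]
      have h1 : ∑ k ∈ B, s k ≤ F B := hsF B
      have h2 : ∑ k ∈ A \ B, s k ≤ ∑ k ∈ A \ B, z k :=
        Finset.sum_le_sum fun k _ => hsz k
      linarith
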